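/- Let n be a positive natural number and τ > 0, γ > 0, p > 0, c ≥ 0, ε > 0 real numbers with τγε² > c. Let x : ℝ → ℝⁿ satisfy γ|x(t)|² ≤ V(t) and V(t) ≤ c/τ + (p|x(0)|² + c/τ)·e^{−τt} for all t ≥ 0, for some function V : ℝ → ℝ. Set T = (1/τ)·ln((τ p |x(0)|² + c)/(τγε² − c)). Then for every t ≥ max(T, 0), |x(t)| ≤ ε. -/

import Mathlib

/-- Euclidean norm of a vector in `ℝⁿ`. -/
noncomputable def eucNorm {n : ℕ} (v : Fin n → ℝ) : ℝ :=
  Real.sqrt (∑ i, v i ^ 2)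

/-- the transient-time estimate: after time
`T = (1/τ)·ln((τp|x(0)|² + c)/(τγε² − c))` the trajectory stays in the ball of
radius `ε`. -/
theorem stmt_6 (n : ℕ) (hn : 0 < n) (τ γ p c ε : ℝ) (hτ : 0 < τ) (hγ : 0 < γ)
    (hp : 0 < p) (hc : 0 ≤ c) (hε : 0 < ε) (hbig : τ * γ * ε ^ 2 > c)
    (x : ℝ → Fin n → ℝ) (V : ℝ → ℝ)
    (hlow : ∀ t ≥ (0 : ℝ), γ * (eucNorm (x t)) ^ 2 ≤ V t)
    (hup : ∀ t ≥ (0 : ℝ),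
      V t ≤ c / τ + (p * (eucNorm (x 0)) ^ 2 + c / τ) * Real.exp (-τ * t)) :
    ∀ t ≥ max ((1 / τ) * Real.log ((τ * p * (eucNorm (x 0)) ^ 2 + c) / (τ * γ * ε ^ 2 - c))) 0,
      eucNorm (x t) ≤ ε := by
  intro t ht
  have ht0 : (0:ℝ) ≤ t := le_trans (le_max_right _ _) ht
  set A : ℝ := p * (eucNorm (x 0)) ^ 2 + c / τ with hA
  have hA0 : 0 ≤ A := by rw [hA]; positivity
  have hD : 0 < τ * γ * ε ^ 2 - c := by linarith
  have key : c / τ + A * Real.exp (-τ * t) ≤ γ * ε ^ 2 := by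
    rcases eq_or_lt_of_le hA0 with hA' | hA'
    · have hcτ : c / τ ≤ γ * ε ^ 2 := by
        rw [div_le_iff₀ hτ]; nlinarith
      rw [← hA']; simpa using hcτ
    · have hTA : τ * p * (eucNorm (x 0)) ^ 2 + c = τ * A := by
        rw [hA, mul_add, mul_div_assoc', mul_div_cancel_left₀ c hτ.ne']; ring
      have hT : (1 / τ) * Real.log ((τ * A) / (τ * γ * ε ^ 2 - c)) ≤ t := by
        rw [← hTA]; exact le_trans (le_max_left _ _) ht
      have hτA : 0 < τ * A := by positivity
      have hτt : Real.log ((τ * A) / (τ * γ * ε ^ 2 - c)) ≤ τ * t := by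
        have := mul_le_mul_of_nonneg_left hT hτ.le
        calc Real.log ((τ * A) / (τ * γ * ε ^ 2 - c))
            = τ * ((1 / τ) * Real.log ((τ * A) / (τ * γ * ε ^ 2 - c))) := by
              field_simp
          _ ≤ τ * t := this
      have hexp : Real.exp (-τ * t) ≤ (τ * γ * ε ^ 2 - c) / (τ * A) := by
        have h1 : Real.exp (-τ * t) ≤ Real.exp (-Real.log ((τ * A) / (τ * γ * ε ^ 2 - c))) := by
          apply Real.exp_le_exp.mpr; linarith
        have h2 : Real.exp (-Real.log ((τ * A) / (τ * γ * ε ^ 2 - c)))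
            = (τ * γ * ε ^ 2 - c) / (τ * A) := by
          rw [Real.exp_neg, Real.exp_log (by positivity), inv_div]
        rw [h2] at h1; exact h1
      have h3 : A * Real.exp (-τ * t) ≤ (τ * γ * ε ^ 2 - c) / τ := by
        have := mul_le_mul_of_nonneg_left hexp hA0
        calc A * Real.exp (-τ * t) ≤ A * ((τ * γ * ε ^ 2 - c) / (τ * A)) := this
          _ = (τ * γ * ε ^ 2 - c) / τ := by
            field_simp
      have : (τ * γ * ε ^ 2 - c) / τ = γ * ε ^ 2 - c / τ := by
        field_simp
      linarith [h3, this ▸ h3]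
  have h1 := hlow t ht0
  have h2 := hup t ht0
  have hsq : (eucNorm (x t)) ^ 2 ≤ ε ^ 2 := by
    have : γ * (eucNorm (x t)) ^ 2 ≤ γ * ε ^ 2 := by linarith
    exact le_of_mul_le_mul_left this hγ
  have hnn : 0 ≤ eucNorm (x t) := Real.sqrt_nonneg _
  nlinarith
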